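/- Let μ be a d-regular measure on a Hilbert space H. There exists a constant ε > 0 depending only on d and C_μ such that for any x ∈ supp(μ), 0 < t ≤ diam(supp(μ)), and any m-dimensional affine subspace L of H with 1 ≤ m < d and x ∈ L, the set (B(x,t) ∩ supp(μ)) \ Tube(L, ε·t) is nonempty; in particular μ(B(x,t) \ Tube(L, ε·t)) > (1/2)·μ(B(x,t)) for ε = (2^{−(3d/2 + m + 1)} C_μ^{−2})^{1/(d−m)}. -/

import Mathlib

open MeasureTheory Metric

/-- The (closed) support of a measure. -/
def msupport {H : Type*} [MetricSpace H] [MeasurableSpace H] (μ : Measure H) : Set H :=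
  {x | ∀ r : ℝ, 0 < r → 0 < μ (closedBall x r)}

/-- μ is d-regular with regularity constant Cμ. -/
def IsDRegular {H : Type*} [MetricSpace H] [MeasurableSpace H] (d : ℕ) (Cμ : ℝ)
    (μ : Measure H) : Prop :=
  1 ≤ Cμ ∧ ∀ x ∈ msupport μ, ∀ t : ℝ, 0 < t →
    ENNReal.ofReal t ≤ EMetric.diam (msupport μ) →
      ENNReal.ofReal (Cμ⁻¹ * t ^ d) ≤ μ (closedBall x t) ∧
        μ (closedBall x t) ≤ ENNReal.ofReal (Cμ * t ^ d)

section Helpers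

open ENNReal

lemma sq_le'_aux {a b : ℝ} (hb : 0 ≤ b) (h : a ^ 2 ≤ b ^ 2) : a ≤ b := by
  nlinarith [le_abs_self a, abs_nonneg a, sq_abs a]

lemma msupport_compl_null {H : Type*} [MetricSpace H] [MeasurableSpace H]
    [SecondCountableTopology H] (μ : Measure H) : μ (msupport μ)ᶜ = 0 := by
  apply measure_null_of_locally_null
  intro z hz
  simp only [msupport, Set.mem_compl_iff, Set.mem_setOf_eq, not_forall] at hz
  obtain ⟨r, hr, hzr⟩ := hz
  exact ⟨closedBall z r, mem_nhdsWithin_of_mem_nhds (closedBall_mem_nhds z hr),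
    nonpos_iff_eq_zero.mp (not_lt.mp hzr)⟩

lemma upper_all {H : Type*} [MetricSpace H] [MeasurableSpace H]
    [SecondCountableTopology H] (d : ℕ) (Cμ : ℝ) (μ : Measure H) (hC : 0 < Cμ)
    (hupper : ∀ z ∈ msupport μ, ∀ s : ℝ, 0 < s →
      ENNReal.ofReal s ≤ EMetric.diam (msupport μ) →
        μ (closedBall z s) ≤ ENNReal.ofReal (Cμ * s ^ d))
    {t : ℝ} (ht : 0 < t) (htd : ENNReal.ofReal t ≤ EMetric.diam (msupport μ)) :
    ∀ z ∈ msupport μ, ∀ r : ℝ, 0 < r → μ (closedBall z r) ≤ ENNReal.ofReal (Cμ * r ^ d) := by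
  intro z hz r hr
  rcases le_or_gt (ENNReal.ofReal r) (EMetric.diam (msupport μ)) with hle | hlt
  · exact hupper z hz r hr hle
  · have hne : EMetric.diam (msupport μ) ≠ ⊤ := hlt.ne_top
    set D := (EMetric.diam (msupport μ)).toReal with hD
    have hDdiam : ENNReal.ofReal D = EMetric.diam (msupport μ) := ENNReal.ofReal_toReal hne
    have htD : t ≤ D := by
      rw [← hDdiam] at htd
      exact (ENNReal.ofReal_le_ofReal_iff ENNReal.toReal_nonneg).mp htd
    have hDpos : 0 < D := lt_of_lt_of_le ht htD
    have hDr : D ≤ r := by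
      rw [← hDdiam] at hlt
      exact le_of_lt ((ENNReal.ofReal_lt_ofReal_iff hr).mp hlt)
    have hsub : closedBall z r ⊆ closedBall z D ∪ (msupport μ)ᶜ := by
      intro w hw
      by_cases hws : w ∈ msupport μ
      · left
        have : edist w z ≤ EMetric.diam (msupport μ) := EMetric.edist_le_diam_of_mem hws hz
        rw [← hDdiam, edist_dist] at this
        exact mem_closedBall.mpr ((ENNReal.ofReal_le_ofReal_iff hDpos.le).mp this)
      · right; exact hws
    calc μ (closedBall z r) ≤ μ (closedBall z D) + μ (msupport μ)ᶜ :=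
          le_trans (measure_mono hsub) (measure_union_le _ _)
      _ = μ (closedBall z D) := by rw [msupport_compl_null, add_zero]
      _ ≤ ENNReal.ofReal (Cμ * D ^ d) := hupper z hz D hDpos (le_of_eq hDdiam)
      _ ≤ ENNReal.ofReal (Cμ * r ^ d) := by
          apply ENNReal.ofReal_le_ofReal
          exact mul_le_mul_of_nonneg_left (pow_le_pow_left₀ hDpos.le hDr d) hC.le

local notation "⟪" x ", " y "⟫" => @inner ℝ _ _ x y

lemma orthogonalProjection_eq_self_iff {H : Type*} [NormedAddCommGroup H] [InnerProductSpace ℝ H]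
    {K : Submodule ℝ H} [K.HasOrthogonalProjection] {v : H} :
    (K.orthogonalProjectionOnto v : H) = v ↔ v ∈ K :=
  Submodule.starProjection_eq_self_iff

lemma pyth_proj {H : Type*} [NormedAddCommGroup H] [InnerProductSpace ℝ H]
    (K : Submodule ℝ H) [K.HasOrthogonalProjection] (a b : H) :
    ‖a - b‖ ^ 2 = ‖(a - K.orthogonalProjectionOnto a) - (b - K.orthogonalProjectionOnto b)‖ ^ 2
      + ‖(K.orthogonalProjectionOnto a : H) - K.orthogonalProjectionOnto b‖ ^ 2 := by
  have h1 : (a - b : H)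
      = ((a - K.orthogonalProjectionOnto a) - (b - K.orthogonalProjectionOnto b))
        + ((K.orthogonalProjectionOnto a : H) - K.orthogonalProjectionOnto b) := by abel
  rw [h1, norm_add_sq_real]
  have hz : ⟪((a - K.orthogonalProjectionOnto a) - (b - K.orthogonalProjectionOnto b)),
      ((K.orthogonalProjectionOnto a : H) - K.orthogonalProjectionOnto b)⟫ = 0 := by
    apply Submodule.inner_left_of_mem_orthogonal
    · exact Submodule.sub_mem K (SetLike.coe_mem _) (SetLike.coe_mem _)
    · exact Submodule.sub_mem Kᗮ (K.sub_starProjection_mem_orthogonal a)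
        (K.sub_starProjection_mem_orthogonal b)
  rw [hz]; ring

lemma packing_bound {k : ℕ} (hk : 0 < k) {A : Set (EuclideanSpace ℝ (Fin k))} {R r : ℝ}
    (hr : 0 < r) (hR : 0 ≤ R) (hA : A ⊆ closedBall 0 R)
    (hsep : A.Pairwise fun p q => 2 * r ≤ dist p q) :
    A.Finite ∧ (A.ncard : ℝ) * r ^ k ≤ (R + r) ^ k := by
  haveI : Nonempty (Fin k) := ⟨⟨0, hk⟩⟩
  set V := volume (ball (0 : EuclideanSpace ℝ (Fin k)) 1) with hV
  have hV0 : V ≠ 0 := (measure_ball_pos volume 0 one_pos).ne'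
  have hVtop : V ≠ ⊤ := measure_ball_lt_top.ne
  have key : ∀ F : Finset (EuclideanSpace ℝ (Fin k)), ↑F ⊆ A →
      (F.card : ℝ) * r ^ k ≤ (R + r) ^ k := by
    intro F hF
    have hdisj : (↑F : Set (EuclideanSpace ℝ (Fin k))).PairwiseDisjoint (fun q => ball q r) := by
      intro p hp q hq hpq
      exact ball_disjoint_ball (by linarith [hsep (hF hp) (hF hq) hpq] : r + r ≤ dist p q)
    have hsum : volume (⋃ q ∈ F, ball q r) = ∑ q ∈ F, volume (ball q r) :=
      measure_biUnion_finset hdisj (fun q _ => measurableSet_ball)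
    have hsub : (⋃ q ∈ F, ball q r) ⊆ ball (0 : EuclideanSpace ℝ (Fin k)) (R + r) := by
      intro z hz
      simp only [Set.mem_iUnion] at hz
      obtain ⟨q, hq, hzq⟩ := hz
      have h1 : dist q 0 ≤ R := hA (hF hq)
      have h2 : dist z q < r := hzq
      exact mem_ball.mpr (lt_of_le_of_lt (dist_triangle z q 0) (by linarith))
    have hball : ∀ q : EuclideanSpace ℝ (Fin k),
        volume (ball q r) = ENNReal.ofReal (r ^ k) * V := by
      intro q
      rw [hV, Measure.addHaar_ball volume q hr.le, finrank_euclideanSpace_fin]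
    have hbig : volume (ball (0 : EuclideanSpace ℝ (Fin k)) (R + r))
        = ENNReal.ofReal ((R + r) ^ k) * V := by
      rw [hV, Measure.addHaar_ball volume _ (by linarith : (0:ℝ) ≤ R + r),
        finrank_euclideanSpace_fin]
    have hchain : (F.card : ℝ≥0∞) * ENNReal.ofReal (r ^ k) * V
        ≤ ENNReal.ofReal ((R + r) ^ k) * V := by
      have h1 : ∑ q ∈ F, volume (ball q r) = (F.card : ℝ≥0∞) * ENNReal.ofReal (r ^ k) * V := by
        simp [hball, Finset.sum_const, nsmul_eq_mul, mul_assoc]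
      rw [← h1, ← hsum, ← hbig]
      exact measure_mono hsub
    have hcard : (F.card : ℝ≥0∞) * ENNReal.ofReal (r ^ k) ≤ ENNReal.ofReal ((R + r) ^ k) :=
      (ENNReal.mul_le_mul_iff_left hV0 hVtop).mp hchain
    have : ENNReal.ofReal ((F.card : ℝ) * r ^ k) ≤ ENNReal.ofReal ((R + r) ^ k) := by
      rwa [ENNReal.ofReal_mul (by positivity), ENNReal.ofReal_natCast]
    exact (ENNReal.ofReal_le_ofReal_iff (by positivity)).mp this
  have hfin : A.Finite := by
    by_contra hinf
    obtain ⟨n, hn⟩ := exists_nat_gt ((R + r) ^ k / r ^ k)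
    obtain ⟨B, hBA, hBfin, hBcard⟩ := Set.Infinite.exists_subset_ncard_eq hinf n
    have := key hBfin.toFinset (by rw [Set.Finite.coe_toFinset]; exact hBA)
    rw [Set.ncard_eq_toFinset_card B hBfin] at hBcard
    rw [hBcard] at this
    have : (R + r) ^ k / r ^ k < (R + r) ^ k / r ^ k := by
      calc (R + r) ^ k / r ^ k < n := hn
        _ ≤ (R + r) ^ k / r ^ k := by
          rw [le_div_iff₀ (by positivity)]
          exact this
    exact lt_irrefl _ this
  refine ⟨hfin, ?_⟩
  have := key hfin.toFinset (by rw [Set.Finite.coe_toFinset])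
  rwa [← Set.ncard_eq_toFinset_card A hfin] at this

lemma numeric_core {d m N : ℕ} (hm1 : 1 ≤ m) (hmd : m < d) {Cμ t ε : ℝ}
    (hC1 : 1 ≤ Cμ) (ht : 0 < t)
    (hε : ε = ((2 : ℝ) ^ (-(3 * (d : ℝ) / 2 + (m : ℝ) + 1)) * Cμ ^ (-2 : ℝ)) ^ (1 / ((d : ℝ) - m)))
    (hεpos : 0 < ε) (hε1 : ε < 1)
    (hN : (N : ℝ) * (ε * t) ^ m ≤ (t + ε * t) ^ m) :
    (N : ℝ) * (Cμ * (2 * Real.sqrt 2 * (ε * t)) ^ d) < 1 / 2 * (Cμ⁻¹ * t ^ d) := by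
  have hCpos : 0 < Cμ := lt_of_lt_of_le one_pos hC1
  set b : ℝ := (2 : ℝ) ^ (-(3 * (d : ℝ) / 2 + (m : ℝ) + 1)) * Cμ ^ (-2 : ℝ) with hb
  have hbpos : 0 < b := by
    apply mul_pos (Real.rpow_pos_of_pos two_pos _) (Real.rpow_pos_of_pos hCpos _)
  have hdm : (m : ℝ) < (d : ℝ) := by exact_mod_cast hmd
  have hcast : ((d - m : ℕ) : ℝ) = (d : ℝ) - m := by
    rw [Nat.cast_sub hmd.le]
  have hεem : ε ^ (d - m : ℕ) = b := by
    rw [hε, ← Real.rpow_natCast (b ^ (1 / ((d:ℝ) - m))) (d - m), ← Real.rpow_mul hbpos.le,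
      hcast, one_div, inv_mul_cancel₀ (by linarith : (d:ℝ) - m ≠ 0), Real.rpow_one]
  have hNε : (N : ℝ) * ε ^ m ≤ (1 + ε) ^ m := by
    have e1 : (ε * t) ^ m = ε ^ m * t ^ m := mul_pow ε t m
    have e2 : (t + ε * t) ^ m = (1 + ε) ^ m * t ^ m := by rw [← mul_pow]; ring_nf
    rw [e1, e2, ← mul_assoc] at hN
    exact le_of_mul_le_mul_right hN (pow_pos ht m)
  have e3 : (2 * Real.sqrt 2 * (ε * t)) ^ d
      = (2 * Real.sqrt 2) ^ d * (ε ^ m * ε ^ (d - m : ℕ)) * t ^ d := by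
    have h : ε ^ m * ε ^ (d - m : ℕ) = ε ^ d := by
      rw [← pow_add, Nat.add_sub_cancel' hmd.le]
    rw [h]; ring
  have ha : (2 * Real.sqrt 2 : ℝ) = (2 : ℝ) ^ ((3 : ℝ) / 2) := by
    rw [show (3:ℝ)/2 = 1 + 1/2 by norm_num, Real.rpow_add two_pos, Real.rpow_one,
      ← Real.sqrt_eq_rpow]
  have had : (2 * Real.sqrt 2 : ℝ) ^ d = (2 : ℝ) ^ ((3 : ℝ) / 2 * d) := by
    rw [ha, Real.rpow_mul two_pos.le, Real.rpow_natCast]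
  have hb2 : (2 * Real.sqrt 2 : ℝ) ^ d * ((2 : ℝ) ^ (-(3 * (d : ℝ) / 2 + (m : ℝ) + 1)))
      = (2 : ℝ) ^ (-((m : ℝ) + 1)) := by
    rw [had, ← Real.rpow_add two_pos]; ring_nf
  have hC2 : Cμ ^ (-2 : ℝ) = (Cμ ^ 2)⁻¹ := by
    rw [show (-2 : ℝ) = -((2 : ℕ) : ℝ) by norm_num, Real.rpow_neg hCpos.le, Real.rpow_natCast]
  have h2m : (2 : ℝ) ^ (-((m : ℝ) + 1)) = ((2 : ℝ) ^ (m + 1 : ℕ))⁻¹ := by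
    rw [show -((m : ℝ) + 1) = -(((m + 1 : ℕ)) : ℝ) by push_cast; ring, Real.rpow_neg two_pos.le,
      Real.rpow_natCast]
  have hstep1 : (N : ℝ) * (Cμ * (2 * Real.sqrt 2 * (ε * t)) ^ d)
      ≤ (1 + ε) ^ m * (Cμ * ((2 * Real.sqrt 2) ^ d * ε ^ (d - m : ℕ) * t ^ d)) := by
    rw [e3]
    have lhs_eq : (N : ℝ) * (Cμ * ((2 * Real.sqrt 2) ^ d * (ε ^ m * ε ^ (d - m : ℕ)) * t ^ d))
        = ((N : ℝ) * ε ^ m) * (Cμ * ((2 * Real.sqrt 2) ^ d * ε ^ (d - m : ℕ) * t ^ d)) := by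
      ring
    rw [lhs_eq]
    apply mul_le_mul_of_nonneg_right hNε
    positivity
  have hstep2 : Cμ * ((2 * Real.sqrt 2) ^ d * ε ^ (d - m : ℕ) * t ^ d)
      = (2 : ℝ) ^ (-((m : ℝ) + 1)) * Cμ⁻¹ * t ^ d := by
    rw [hεem, hb]
    have h4 : Cμ * ((2 * Real.sqrt 2) ^ d *
        ((2 : ℝ) ^ (-(3 * (d : ℝ) / 2 + (m : ℝ) + 1)) * Cμ ^ (-2 : ℝ)) * t ^ d)
        = ((2 * Real.sqrt 2) ^ d * (2 : ℝ) ^ (-(3 * (d : ℝ) / 2 + (m : ℝ) + 1)))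
          * (Cμ * Cμ ^ (-2 : ℝ)) * t ^ d := by ring
    rw [h4, hb2, hC2]
    have h5 : Cμ * (Cμ ^ 2)⁻¹ = Cμ⁻¹ := by
      field_simp
    rw [h5]
  have hstep3 : (1 + ε) ^ m * ((2 : ℝ) ^ (-((m : ℝ) + 1)) * Cμ⁻¹ * t ^ d)
      < 1 / 2 * (Cμ⁻¹ * t ^ d) := by
    rw [h2m]
    have hlt : (1 + ε) ^ m < 2 ^ m :=
      pow_lt_pow_left₀ (by linarith) (by positivity) (by omega)
    have h2 : ((2 : ℝ) ^ (m + 1 : ℕ))⁻¹ * (2 : ℝ) ^ m = 1 / 2 := by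
      rw [pow_succ]
      field_simp
    calc (1 + ε) ^ m * (((2 : ℝ) ^ (m + 1 : ℕ))⁻¹ * Cμ⁻¹ * t ^ d)
        < 2 ^ m * (((2 : ℝ) ^ (m + 1 : ℕ))⁻¹ * Cμ⁻¹ * t ^ d) := by
          apply mul_lt_mul_of_pos_right hlt
          positivity
      _ = (((2 : ℝ) ^ (m + 1 : ℕ))⁻¹ * (2 : ℝ) ^ m) * (Cμ⁻¹ * t ^ d) := by ring
      _ = 1 / 2 * (Cμ⁻¹ * t ^ d) := by rw [h2]
  calc (N : ℝ) * (Cμ * (2 * Real.sqrt 2 * (ε * t)) ^ d)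
      ≤ (1 + ε) ^ m * (Cμ * ((2 * Real.sqrt 2) ^ d * ε ^ (d - m : ℕ) * t ^ d)) := hstep1
    _ = (1 + ε) ^ m * ((2 : ℝ) ^ (-((m : ℝ) + 1)) * Cμ⁻¹ * t ^ d) := by rw [hstep2]
    _ < 1 / 2 * (Cμ⁻¹ * t ^ d) := hstep3

end Helpers

set_option maxHeartbeats 2000000 in
/-- Escaping tubes: with ε = (2^{−(3d/2+m+1)}·Cμ^{−2})^{1/(d−m)} > 0, for any x ∈ supp μ,
0 < t ≤ diam supp μ, and any m-plane L through x with 1 ≤ m < d, the set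
(B(x,t) ∩ supp μ) \ Tube(L, ε t) is nonempty; in particular
μ(B(x,t) \ Tube(L, ε t)) > μ(B(x,t))/2. -/
theorem escape_from_tube {H : Type*} [NormedAddCommGroup H] [InnerProductSpace ℝ H]
    [CompleteSpace H] [SecondCountableTopology H] [MeasurableSpace H] [BorelSpace H]
    (d : ℕ) (hdim : (d : Cardinal) < Module.rank ℝ H)
    (Cμ : ℝ) (μ : Measure H) (hreg : IsDRegular d Cμ μ)
    (m : ℕ) (hm1 : 1 ≤ m) (hmd : m < d)
    (x : H) (hx : x ∈ msupport μ) (t : ℝ) (ht : 0 < t)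
    (htd : ENNReal.ofReal t ≤ EMetric.diam (msupport μ))
    (L : AffineSubspace ℝ H) (hxL : x ∈ L) (hL : Module.finrank ℝ L.direction = m) :
    0 < ((2 : ℝ) ^ (-(3 * (d : ℝ) / 2 + (m : ℝ) + 1)) * Cμ ^ (-2 : ℝ)) ^ (1 / ((d : ℝ) - m)) ∧
    ((closedBall x t ∩ msupport μ) \
        {y | Metric.infDist y (L : Set H) ≤
          ((2 : ℝ) ^ (-(3 * (d : ℝ) / 2 + (m : ℝ) + 1)) * Cμ ^ (-2 : ℝ)) ^ (1 / ((d : ℝ) - m))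
            * t}).Nonempty ∧
    μ (closedBall x t) / 2 <
      μ (closedBall x t \
        {y | Metric.infDist y (L : Set H) ≤
          ((2 : ℝ) ^ (-(3 * (d : ℝ) / 2 + (m : ℝ) + 1)) * Cμ ^ (-2 : ℝ)) ^ (1 / ((d : ℝ) - m))
            * t}) := by
  obtain ⟨hC1, hreg'⟩ := hreg
  have hCpos : 0 < Cμ := lt_of_lt_of_le one_pos hC1
  set ε : ℝ :=
    ((2 : ℝ) ^ (-(3 * (d : ℝ) / 2 + (m : ℝ) + 1)) * Cμ ^ (-2 : ℝ)) ^ (1 / ((d : ℝ) - m))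
    with hεdef
  have hbpos : 0 < (2 : ℝ) ^ (-(3 * (d : ℝ) / 2 + (m : ℝ) + 1)) * Cμ ^ (-2 : ℝ) :=
    mul_pos (Real.rpow_pos_of_pos two_pos _) (Real.rpow_pos_of_pos hCpos _)
  have hεpos : 0 < ε := Real.rpow_pos_of_pos hbpos _
  have hdm : (m : ℝ) < (d : ℝ) := by exact_mod_cast hmd
  have hb1 : (2 : ℝ) ^ (-(3 * (d : ℝ) / 2 + (m : ℝ) + 1)) * Cμ ^ (-2 : ℝ) < 1 := by
    have h1 : (2 : ℝ) ^ (-(3 * (d : ℝ) / 2 + (m : ℝ) + 1)) < 1 := by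
      apply Real.rpow_lt_one_of_one_lt_of_neg one_lt_two
      have h0 : (0:ℝ) ≤ (d:ℝ) := Nat.cast_nonneg d
      have h0' : (0:ℝ) ≤ (m:ℝ) := Nat.cast_nonneg m
      linarith
    have h2 : Cμ ^ (-2 : ℝ) ≤ 1 := Real.rpow_le_one_of_one_le_of_nonpos hC1 (by norm_num)
    have h3 : 0 < Cμ ^ (-2 : ℝ) := Real.rpow_pos_of_pos hCpos _
    nlinarith
  have hε1 : ε < 1 := Real.rpow_lt_one hbpos.le hb1 (by rw [one_div]; (exact inv_pos.mpr (by linarith)))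
  have hεt : 0 < ε * t := mul_pos hεpos ht
  -- Subspace and projection setup
  set K := L.direction with hK
  haveI : FiniteDimensional ℝ K := FiniteDimensional.of_finrank_pos (by rw [hL]; omega)
  have hmemK : ∀ p ∈ L, p - x ∈ K := by
    intro p hp
    have := AffineSubspace.vsub_mem_direction hp hxL
    simpa [vsub_eq_sub] using this
  set P : H → H := fun y => (↑(K.orthogonalProjectionOnto (y - x)) : H) + x with hP
  have hPL : ∀ y, P y ∈ L := by
    intro y
    exact AffineSubspace.vadd_mem_of_mem_direction (SetLike.coe_mem _) hxL
  have hPfix : ∀ p ∈ L, P p = p := by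
    intro p hp
    simp only [hP]
    rw [orthogonalProjection_eq_self_iff.mpr (hmemK p hp)]
    abel
  have hpyth : ∀ u v : H,
      ‖u - v‖ ^ 2 = ‖(u - P u) - (v - P v)‖ ^ 2 + ‖P u - P v‖ ^ 2 := by
    intro u v
    have h := pyth_proj K (u - x) (v - x)
    have e1 : u - x - (v - x) = u - v := by abel
    have e2 : u - x - ↑(K.orthogonalProjectionOnto (u - x)) = u - P u := by
      simp only [hP]; abel
    have e3 : v - x - ↑(K.orthogonalProjectionOnto (v - x)) = v - P v := by
      simp only [hP]; abel
    have e4 : (↑(K.orthogonalProjectionOnto (u - x)) : H) - ↑(K.orthogonalProjectionOnto (v - x))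
        = P u - P v := by simp only [hP]; abel
    rw [e1, e2, e3, e4] at h
    exact h
  set T : Set H := {y | Metric.infDist y (L : Set H) ≤ ε * t} with hT
  have hLne : (L : Set H).Nonempty := ⟨x, hxL⟩
  have hmin : ∀ y : H, ∀ p ∈ L, ‖y - P y‖ ≤ ‖y - p‖ := by
    intro y p hp
    have h := hpyth y p
    rw [hPfix p hp, sub_self, sub_zero] at h
    exact sq_le'_aux (norm_nonneg _) (by nlinarith [sq_nonneg ‖P y - p‖])
  have htube : ∀ y ∈ T, ‖y - P y‖ ≤ ε * t := by
    intro y hy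
    by_contra hcon
    push_neg at hcon
    have h1 : Metric.infDist y (L : Set H) < ‖y - P y‖ := lt_of_le_of_lt hy hcon
    obtain ⟨p, hp, hlt⟩ := (Metric.infDist_lt_iff hLne).mp h1
    rw [dist_eq_norm] at hlt
    exact absurd hlt (not_lt.mpr (hmin y p hp))
  set S : Set H := (closedBall x t ∩ msupport μ) ∩ T with hS
  set S' : Set H := P '' S with hS'
  have hS'cb : ∀ q ∈ S', q ∈ closedBall x t := by
    intro q hq
    obtain ⟨y, hy, rfl⟩ := hq
    have h := hpyth y x
    rw [hPfix x hxL, sub_self, sub_zero] at h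
    have h2 : ‖P y - x‖ ≤ ‖y - x‖ :=
      sq_le'_aux (norm_nonneg _) (by nlinarith [sq_nonneg ‖y - P y‖])
    have hyx : ‖y - x‖ ≤ t := by
      rw [← dist_eq_norm]; exact mem_closedBall.mp hy.1.1
    exact mem_closedBall.mpr (by rw [dist_eq_norm]; exact le_trans h2 hyx)
  have hS'L : ∀ q ∈ S', q ∈ L := by
    intro q hq
    obtain ⟨y, _, rfl⟩ := hq
    exact hPL y
  -- Maximal separated subset of S' via Zorn
  have hzorn : ∀ c ⊆ {A : Set H | A ⊆ S' ∧ A.Pairwise fun p q => 2 * (ε * t) ≤ dist p q},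
      IsChain (· ⊆ ·) c → ∃ ub ∈ {A : Set H | A ⊆ S' ∧
        A.Pairwise fun p q => 2 * (ε * t) ≤ dist p q}, ∀ s ∈ c, s ⊆ ub := by
    intro c hcsub hchain
    refine ⟨⋃₀ c, ⟨Set.sUnion_subset fun A hA => (hcsub hA).1, ?_⟩,
      fun s hs => Set.subset_sUnion_of_mem hs⟩
    intro p hp q hq hne
    obtain ⟨Ap, hAp, hpAp⟩ := hp
    obtain ⟨Aq, hAq, hqAq⟩ := hq
    rcases hchain.total hAp hAq with h | h
    · exact (hcsub hAq).2 (h hpAp) hqAq hne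
    · exact (hcsub hAp).2 hpAp (h hqAq) hne
  obtain ⟨pts, hptsmax⟩ := zorn_subset
      {A : Set H | A ⊆ S' ∧ A.Pairwise fun p q => 2 * (ε * t) ≤ dist p q} hzorn
  have hptsS' : pts ⊆ S' := hptsmax.1.1
  have hptssep : pts.Pairwise fun p q => 2 * (ε * t) ≤ dist p q := hptsmax.1.2
  have hclose : ∀ q ∈ S', ∃ p ∈ pts, dist q p < 2 * (ε * t) := by
    intro q hq
    by_contra hcon
    push_neg at hcon
    have hins : insert q pts ∈
        {A : Set H | A ⊆ S' ∧ A.Pairwise fun p q => 2 * (ε * t) ≤ dist p q} := by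
      constructor
      · exact Set.insert_subset hq hptsS'
      · rw [Set.pairwise_insert]
        exact ⟨hptssep, fun p hp _ => ⟨hcon p hp, by rw [dist_comm]; exact hcon p hp⟩⟩
    have hsub : insert q pts ⊆ pts := hptsmax.2 hins (Set.subset_insert q pts)
    have hqpts : q ∈ pts := hsub (Set.mem_insert q pts)
    have := hcon q hqpts
    rw [dist_self] at this
    linarith
  -- Map to Euclidean space and apply the packing bound
  set B' : OrthonormalBasis (Fin m) ℝ K :=
    (stdOrthonormalBasis ℝ K).reindex (finCongr hL) with hB'
  set f : H → EuclideanSpace ℝ (Fin m) := fun y => B'.repr (K.orthogonalProjectionOnto (y - x))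
    with hf
  have hfdist : ∀ p ∈ L, ∀ q ∈ L, dist (f p) (f q) = dist p q := by
    intro p hp q hq
    have h1 : dist (f p) (f q)
        = dist (K.orthogonalProjectionOnto (p - x)) (K.orthogonalProjectionOnto (q - x)) :=
      B'.repr.dist_map _ _
    rw [h1, Subtype.dist_eq, orthogonalProjection_eq_self_iff.mpr (hmemK p hp),
      orthogonalProjection_eq_self_iff.mpr (hmemK q hq), dist_eq_norm, dist_eq_norm]
    congr 1
    abel
  have hfx : f x = 0 := by
    simp only [hf, sub_self, map_zero]
  have hAsub : f '' pts ⊆ closedBall 0 t := by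
    rintro _ ⟨p, hp, rfl⟩
    rw [mem_closedBall, ← hfx, hfdist p (hS'L p (hptsS' hp)) x hxL]
    exact mem_closedBall.mp (hS'cb p (hptsS' hp))
  have hApair : (f '' pts).Pairwise fun p q => 2 * (ε * t) ≤ dist p q := by
    rintro _ ⟨p, hp, rfl⟩ _ ⟨q, hq, rfl⟩ hne
    have hpq : p ≠ q := fun h => hne (by rw [h])
    rw [hfdist p (hS'L p (hptsS' hp)) q (hS'L q (hptsS' hq))]
    exact hptssep hp hq hpq
  obtain ⟨hAfin, hAcard⟩ := packing_bound (by omega : 0 < m) hεt ht.le hAsub hApair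
  have hinj : Set.InjOn f pts := by
    intro p hp q hq h
    have hd := hfdist p (hS'L p (hptsS' hp)) q (hS'L q (hptsS' hq))
    rw [h, dist_self] at hd
    exact dist_eq_zero.mp hd.symm
  have hptsfin : pts.Finite := Set.Finite.of_finite_image hAfin hinj
  have hcardeq : (f '' pts).ncard = pts.ncard := Set.ncard_image_of_injOn hinj
  have hNB : (pts.ncard : ℝ) * (ε * t) ^ m ≤ (t + ε * t) ^ m := by
    rw [← hcardeq]; exact hAcard
  -- Choose support points above each net point
  have hwex : ∀ q ∈ pts, ∃ y, y ∈ S ∧ P y = q := by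
    intro q hq
    obtain ⟨y, hy, hyq⟩ := hptsS' hq
    exact ⟨y, hy, hyq⟩
  choose! w hwS hwP using hwex
  set F := hptsfin.toFinset with hF
  set r₂ : ℝ := 2 * Real.sqrt 2 * (ε * t) with hr₂
  have hsqrt2 : (0:ℝ) < Real.sqrt 2 := Real.sqrt_pos.mpr two_pos
  have hr₂pos : 0 < r₂ := by rw [hr₂]; positivity
  have hcover : S ⊆ ⋃ q ∈ F, closedBall (w q) r₂ := by
    intro y hy
    have hPy : P y ∈ S' := ⟨y, hy, rfl⟩
    obtain ⟨q, hq, hqlt⟩ := hclose (P y) hPy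
    have hqF : q ∈ F := hptsfin.mem_toFinset.mpr hq
    refine Set.mem_biUnion hqF ?_
    have h1 : ‖y - P y‖ ≤ ε * t := htube y hy.2
    have h2 : ‖w q - P (w q)‖ ≤ ε * t := htube (w q) (hwS q hq).2
    have h3 : ‖P y - P (w q)‖ < 2 * (ε * t) := by
      rw [hwP q hq, ← dist_eq_norm]
      exact hqlt
    have h := hpyth y (w q)
    have hsq : ‖y - w q‖ ^ 2 ≤ 8 * (ε * t) ^ 2 := by
      rw [h]
      have hn1 : ‖(y - P y) - (w q - P (w q))‖ ≤ 2 * (ε * t) :=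
        le_trans (norm_sub_le _ _) (by linarith)
      have ha2 := pow_le_pow_left₀ (norm_nonneg ((y - P y) - (w q - P (w q)))) hn1 2
      have hb2 := pow_le_pow_left₀ (norm_nonneg (P y - P (w q))) h3.le 2
      have hc2 : (2 * (ε * t)) ^ 2 + (2 * (ε * t)) ^ 2 = 8 * (ε * t) ^ 2 := by ring
      linarith
    have hle : ‖y - w q‖ ≤ r₂ := by
      apply sq_le'_aux hr₂pos.le
      have hr₂sq : r₂ ^ 2 = 8 * (ε * t) ^ 2 := by
        rw [hr₂, mul_pow, mul_pow, Real.sq_sqrt two_pos.le]; ring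
      rw [hr₂sq]; exact hsq
    exact mem_closedBall.mpr (by rw [dist_eq_norm]; exact hle)
  -- Measure estimates
  have hballs : ∀ q ∈ F, μ (closedBall (w q) r₂) ≤ ENNReal.ofReal (Cμ * r₂ ^ d) := by
    intro q hq
    exact upper_all d Cμ μ hCpos (fun z hz s hs hsd => (hreg' z hz s hs hsd).2) ht htd
      (w q) (hwS q (hptsfin.mem_toFinset.mp hq)).1.2 r₂ hr₂pos
  have hFN : F.card = pts.ncard := by
    rw [hF, Set.ncard_eq_toFinset_card pts hptsfin]
  have hST : μ (closedBall x t ∩ T) ≤ ENNReal.ofReal ((pts.ncard : ℝ) * (Cμ * r₂ ^ d)) := by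
    have hsub2 : closedBall x t ∩ T ⊆ S ∪ (msupport μ)ᶜ := by
      intro y hy
      by_cases hys : y ∈ msupport μ
      · left; exact ⟨⟨hy.1, hys⟩, hy.2⟩
      · right; exact hys
    calc μ (closedBall x t ∩ T)
        ≤ μ S + μ (msupport μ)ᶜ := le_trans (measure_mono hsub2) (measure_union_le _ _)
      _ = μ S := by rw [msupport_compl_null, add_zero]
      _ ≤ μ (⋃ q ∈ F, closedBall (w q) r₂) := measure_mono hcover
      _ ≤ ∑ q ∈ F, μ (closedBall (w q) r₂) := measure_biUnion_finset_le F _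
      _ ≤ ∑ _q ∈ F, ENNReal.ofReal (Cμ * r₂ ^ d) := Finset.sum_le_sum hballs
      _ = (F.card : ENNReal) * ENNReal.ofReal (Cμ * r₂ ^ d) := by
          rw [Finset.sum_const, nsmul_eq_mul]
      _ = ENNReal.ofReal ((pts.ncard : ℝ) * (Cμ * r₂ ^ d)) := by
          rw [← hFN, ENNReal.ofReal_mul (Nat.cast_nonneg F.card), ENNReal.ofReal_natCast]
  have hnum : (pts.ncard : ℝ) * (Cμ * r₂ ^ d) < 1 / 2 * (Cμ⁻¹ * t ^ d) := by
    rw [hr₂]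
    exact numeric_core hm1 hmd hC1 ht hεdef hεpos hε1 hNB
  have hSTlt : μ (closedBall x t ∩ T) < ENNReal.ofReal (1 / 2 * (Cμ⁻¹ * t ^ d)) :=
    lt_of_le_of_lt hST ((ENNReal.ofReal_lt_ofReal_iff (by positivity)).mpr hnum)
  obtain ⟨hlow, hup⟩ := hreg' x hx t ht htd
  have hμfin : μ (closedBall x t) ≠ ⊤ := (lt_of_le_of_lt hup ENNReal.ofReal_lt_top).ne
  have hμ0 : 0 < μ (closedBall x t) := hx t ht
  have hhalf : ENNReal.ofReal (1 / 2 * (Cμ⁻¹ * t ^ d)) ≤ μ (closedBall x t) / 2 := by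
    have h1 : ENNReal.ofReal (1 / 2 * (Cμ⁻¹ * t ^ d)) = ENNReal.ofReal (Cμ⁻¹ * t ^ d) / 2 := by
      rw [show (1:ℝ)/2 * (Cμ⁻¹ * t ^ d) = (Cμ⁻¹ * t ^ d) / 2 by ring,
        ENNReal.ofReal_div_of_pos two_pos, ENNReal.ofReal_ofNat]
    rw [h1]
    exact ENNReal.div_le_div_right hlow 2
  have hSThalf : μ (closedBall x t ∩ T) < μ (closedBall x t) / 2 := lt_of_lt_of_le hSTlt hhalf
  have hsplit : μ (closedBall x t) ≤ μ (closedBall x t \ T) + μ (closedBall x t ∩ T) := by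
    conv_lhs => rw [← Set.diff_union_inter (closedBall x t) T]
    exact measure_union_le _ _
  have hmain : μ (closedBall x t) / 2 < μ (closedBall x t \ T) := by
    by_contra hcon
    push_neg at hcon
    have hhalftop : μ (closedBall x t) / 2 ≠ ⊤ := by
      simp [ENNReal.div_eq_top, hμfin]
    have h1 : μ (closedBall x t) < μ (closedBall x t) := by
      calc μ (closedBall x t)
          ≤ μ (closedBall x t \ T) + μ (closedBall x t ∩ T) := hsplit
        _ ≤ μ (closedBall x t) / 2 + μ (closedBall x t ∩ T) := add_le_add_left hcon _
        _ < μ (closedBall x t) / 2 + μ (closedBall x t) / 2 :=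
            ENNReal.add_lt_add_left hhalftop hSThalf
        _ = μ (closedBall x t) := ENNReal.add_halves _
    exact lt_irrefl _ h1
  have hne : ((closedBall x t ∩ msupport μ) \ T).Nonempty := by
    have hsub3 : closedBall x t \ T ⊆ ((closedBall x t ∩ msupport μ) \ T) ∪ (msupport μ)ᶜ := by
      intro y hy
      by_cases hys : y ∈ msupport μ
      · left; exact ⟨⟨hy.1, hys⟩, hy.2⟩
      · right; exact hys
    have hpos : 0 < μ (closedBall x t \ T) :=
      lt_of_lt_of_le (ENNReal.half_pos hμ0.ne') hmain.le
    have hpos2 : 0 < μ ((closedBall x t ∩ msupport μ) \ T) := by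
      by_contra hz
      push_neg at hz
      have hz0 : μ ((closedBall x t ∩ msupport μ) \ T) = 0 := le_antisymm hz (zero_le ..)
      have : μ (closedBall x t \ T) = 0 := by
        refine le_antisymm ?_ (zero_le ..)
        calc μ (closedBall x t \ T)
            ≤ μ ((closedBall x t ∩ msupport μ) \ T) + μ (msupport μ)ᶜ :=
              le_trans (measure_mono hsub3) (measure_union_le _ _)
          _ = 0 := by rw [hz0, msupport_compl_null, add_zero]
      rw [this] at hpos
      exact lt_irrefl _ hpos
    exact nonempty_of_measure_ne_zero hpos2.ne'
  exact ⟨hεpos, hne, hmain⟩
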